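/- In the ring of formal power series in q over the polynomial ring ℚ[z], the identity ∑_{n=1}^∞ z^n q^{n²} · (zq^{n+1};q)_∞ · ((q;q)_{n−1})^{−1} = ∑_{n=1}^∞ (−1)^{n−1} z^n q^{n(n+1)/2} holds. -/

import Mathlib

open PowerSeries

/-- The coefficientwise sum of a family of formal power series; it agrees with
the sum of the family whenever `coeff N (f n) = 0` for `n > N` (so that the
partial sums converge coefficientwise in the `q`-adic topology). -/
noncomputable def seriesSum {R : Type*} [CommRing R] (f : ℕ → PowerSeries R) : PowerSeries R :=
  PowerSeries.mk fun N => ∑ n ∈ Finset.range (N + 1), PowerSeries.coeff N (f n)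

/-- The coefficientwise infinite product of a family of formal power series;
it agrees with the product of the family whenever each factor `f k` is
`1 + (terms of order > k)` (so that the partial products converge
coefficientwise in the `q`-adic topology). -/
noncomputable def seriesProd {R : Type*} [CommRing R] (f : ℕ → PowerSeries R) : PowerSeries R :=
  PowerSeries.mk fun N => PowerSeries.coeff N (∏ k ∈ Finset.range (N + 1), f k)

/-- The series `z`: the coefficient variable of `ℚ[z]` viewed as a constant
formal power series in `q`. -/
noncomputable def zz : PowerSeries (Polynomial ℚ) :=
  PowerSeries.C Polynomial.X

namespace StmtAux

open Finset

abbrev PS : Type := PowerSeries (Polynomial ℚ)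

noncomputable abbrev co (N : ℕ) : PS →ₗ[Polynomial ℚ] Polynomial ℚ := PowerSeries.coeff N

lemma coeff_seriesSum (f : ℕ → PS) (N : ℕ) :
    co N (seriesSum f) = ∑ n ∈ range (N + 1), co N (f n) := by
  simp [seriesSum, co, PowerSeries.coeff_mk]

lemma coeff_seriesProd (f : ℕ → PS) (N : ℕ) :
    co N (seriesProd f) = co N (∏ k ∈ range (N + 1), f k) := by
  simp [seriesProd, co, PowerSeries.coeff_mk]

lemma seriesSum_congr {f g : ℕ → PS} (h : ∀ n, f n = g n) : seriesSum f = seriesSum g := by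
  have : f = g := funext h
  rw [this]

lemma coeff_van (a b : PS) (e N : ℕ) (h : N < e) : co N (a * X ^ e * b) = 0 := by
  rw [show a * X ^ e * b = (a * b) * X ^ e by ring]
  rw [co, PowerSeries.coeff_mul_X_pow', if_neg (by omega)]

lemma seriesSum_sub (f g : ℕ → PS) :
    seriesSum (fun n => f n - g n) = seriesSum f - seriesSum g := by
  ext N : 1
  simp [coeff_seriesSum, Finset.sum_sub_distrib]

lemma seriesSum_neg (f : ℕ → PS) : seriesSum (fun n => -(f n)) = -seriesSum f := by
  ext N : 1; simp [coeff_seriesSum]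

lemma seriesSum_mul (A : PS) (f : ℕ → PS) (hf : ∀ n N, N < n → co N (f n) = 0) :
    A * seriesSum f = seriesSum (fun n => A * f n) := by
  ext N : 1
  rw [coeff_seriesSum, PowerSeries.coeff_mul]
  have h1 : ∀ p ∈ Finset.HasAntidiagonal.antidiagonal N, (co p.1) A * (co p.2) (seriesSum f)
      = ∑ n ∈ range (N + 1), (co p.1) A * (co p.2) (f n) := by
    intro p hp
    rw [coeff_seriesSum, Finset.mul_sum]
    apply Finset.sum_subset
    · apply Finset.range_subset_range.mpr
      have := Finset.HasAntidiagonal.mem_antidiagonal.mp hp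
      omega
    · intro n _ hn2
      rw [hf n p.2 (by simpa using hn2), mul_zero]
  rw [Finset.sum_congr rfl h1, Finset.sum_comm]
  exact Finset.sum_congr rfl fun n _ => (PowerSeries.coeff_mul N A (f n)).symm

lemma seriesSum_shift (f : ℕ → PS) (h0 : f 0 = 0) (hf : ∀ n N, N < n → co N (f n) = 0) :
    seriesSum f = seriesSum (fun n => f (n + 1)) := by
  ext N : 1
  rw [coeff_seriesSum, coeff_seriesSum]
  have e1 := Finset.sum_range_succ (fun n => co N (f n)) (N + 1)
  have e2 := Finset.sum_range_succ' (fun n => co N (f n)) (N + 1)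
  rw [hf (N + 1) N (by omega)] at e1
  rw [h0] at e2
  simp only [map_zero, add_zero] at e1 e2
  rw [← e1, e2]


/-! ### (q;q)_n and its inverse -/

noncomputable def QQ (n : ℕ) : PS := ∏ k ∈ range n, (1 - (X : PS) ^ (k + 1))

noncomputable def iQ (n : ℕ) : PS := Ring.inverse (QQ n)

lemma isUnit_QQ (n : ℕ) : IsUnit (QQ n) := by
  rw [PowerSeries.isUnit_iff_constantCoeff]
  have h : constantCoeff (QQ n) = 1 := by
    rw [QQ, map_prod]
    apply Finset.prod_eq_one
    intro k _
    simp [constantCoeff_X]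
  rw [h]; exact isUnit_one

lemma QQ_mul_iQ (n : ℕ) : QQ n * iQ n = 1 := Ring.mul_inverse_cancel _ (isUnit_QQ n)

lemma QQ_succ (n : ℕ) : QQ (n + 1) = QQ n * (1 - X ^ (n + 1)) := Finset.prod_range_succ _ _

lemma iQ_zero : iQ 0 = 1 := by simp [iQ, QQ, Ring.inverse_one]

lemma iQ_succ (n : ℕ) : (1 - (X : PS) ^ (n + 1)) * iQ (n + 1) = iQ n := by
  refine (isUnit_QQ n).mul_left_cancel ?_
  rw [← mul_assoc, ← QQ_succ, QQ_mul_iQ, QQ_mul_iQ]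

/-! ### the infinite products E a = (z q^a ; q)_∞ -/

noncomputable def EE (a : ℕ) : PS := seriesProd (fun k => 1 - zz * X ^ (a + k))

lemma coeff_prod_drop (F : PS) (e N : ℕ) (h : N < e) :
    co N (F * (1 - zz * X ^ e)) = co N F := by
  rw [show F * (1 - zz * X ^ e) = F - (F * zz) * X ^ e by ring, map_sub]
  rw [co, PowerSeries.coeff_mul_X_pow', if_neg (by omega)]
  simp

lemma coeff_prodE (a N M : ℕ) (hM : N + 1 ≤ M) :
    co N (∏ k ∈ range M, (1 - zz * X ^ (a + k))) =
    co N (∏ k ∈ range (N + 1), (1 - zz * X ^ (a + k))) := by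
  induction M, hM using Nat.le_induction with
  | base => rfl
  | succ M hM ih =>
    rw [Finset.prod_range_succ, coeff_prod_drop _ _ _ (by omega), ih]

lemma coeff_EE (a N : ℕ) :
    co N (EE a) = co N (∏ k ∈ range (N + 1), (1 - zz * X ^ (a + k))) :=
  coeff_seriesProd _ _

lemma coeff_EE_big (a N : ℕ) (h : N < a) : co N (EE a) = co N (1 : PS) := by
  rw [coeff_EE]
  have : ∀ M : ℕ, co N (∏ k ∈ range M, (1 - zz * X ^ (a + k))) = co N (1 : PS) := by
    intro M
    induction M with
    | zero => simp
    | succ M ih => rw [Finset.prod_range_succ, coeff_prod_drop _ _ _ (by omega), ih]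
  exact this (N + 1)

lemma EE_rec (a : ℕ) : EE a = (1 - zz * X ^ a) * EE (a + 1) := by
  ext N : 1
  rw [coeff_EE, PowerSeries.coeff_mul]
  have h1 : ∀ p ∈ Finset.HasAntidiagonal.antidiagonal N,
      (co p.1) (1 - zz * X ^ a) * (co p.2) (EE (a + 1)) =
      (co p.1) (1 - zz * X ^ a) *
        (co p.2) (∏ k ∈ range (N + 1), (1 - zz * X ^ (a + 1 + k))) := by
    intro p hp
    rw [coeff_EE, coeff_prodE (a + 1) p.2 (N + 1)
      (by have := Finset.HasAntidiagonal.mem_antidiagonal.mp hp; omega)]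
  rw [Finset.sum_congr rfl h1, ← PowerSeries.coeff_mul]
  have h2 : (1 - zz * X ^ a) * (∏ k ∈ range (N + 1), (1 - zz * X ^ (a + 1 + k))) =
      ∏ k ∈ range (N + 2), (1 - zz * X ^ (a + k)) := by
    rw [Finset.prod_range_succ' (fun k => 1 - zz * X ^ (a + k)) (N + 1)]
    rw [mul_comm]
    refine congrArg (· * _) ?_
    apply Finset.prod_congr rfl
    intro k _
    rw [show a + (k + 1) = a + 1 + k by omega]
  rw [h2, coeff_prodE a N (N + 2) (by omega)]


/-! ### the Euler sums S a = ∑_j (-1)^j z^j q^{ja + C(j,2)} / (q)_j -/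

noncomputable def tS (a j : ℕ) : PS :=
  ((-1) ^ j * zz ^ j) * X ^ (j * a + j.choose 2) * iQ j

noncomputable def SS (a : ℕ) : PS := seriesSum (tS a)

lemma tS_zero (a : ℕ) : tS a 0 = 1 := by
  simp [tS, iQ_zero]

lemma coeff_tS_van (a j N : ℕ) (h : N < j * a + j.choose 2) : co N (tS a j) = 0 :=
  coeff_van _ _ _ _ h

lemma coeff_tS_lt (a j N : ℕ) (ha : 1 ≤ a) (h : N < j) : co N (tS a j) = 0 := by
  apply coeff_tS_van
  have : j * 1 ≤ j * a := Nat.mul_le_mul_left j ha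
  omega

lemma choose_two_succ (j : ℕ) : (j + 1).choose 2 = j + j.choose 2 := by
  rw [show (2:ℕ) = 1 + 1 from rfl, Nat.choose_succ_succ, Nat.choose_one_right]

lemma SS_rec (a : ℕ) (ha : 1 ≤ a) : SS a = (1 - zz * X ^ a) * SS (a + 1) := by
  have hu : zz * X ^ a * SS (a + 1) = seriesSum (fun j => zz * X ^ a * tS (a + 1) j) :=
    seriesSum_mul _ _ (fun n N h => coeff_tS_lt (a + 1) n N (by omega) h)
  have hw : seriesSum (fun j => tS a j - tS (a + 1) j)
      = seriesSum (fun j => -(zz * X ^ a * tS (a + 1) j)) := by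
    refine (seriesSum_shift _ ?_ ?_).trans (seriesSum_congr ?_)
    · rw [tS_zero, tS_zero, sub_self]
    · intro n N h
      rw [map_sub, coeff_tS_lt a n N ha h, coeff_tS_lt (a + 1) n N (by omega) h, sub_zero]
    · intro j
      have h1 : (X : PS) ^ ((j + 1) * (a + 1) + (j + 1).choose 2)
          = X ^ ((j + 1) * a + (j + 1).choose 2) * X ^ (j + 1) := by
        rw [← pow_add]; congr 1; ring
      have h2 : (X : PS) ^ a * X ^ (j * (a + 1) + j.choose 2)
          = X ^ ((j + 1) * a + (j + 1).choose 2) := by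
        rw [← pow_add]; congr 1; rw [choose_two_succ]; ring
      have key := iQ_succ j
      simp only [tS]
      rw [h1]
      linear_combination ((-1 : PS) ^ (j + 1) * zz ^ (j + 1) *
          X ^ ((j + 1) * a + (j + 1).choose 2)) * key +
        (zz * ((-1 : PS) ^ j * zz ^ j) * iQ j) * h2
  have hsub : SS a - SS (a + 1) = -(zz * X ^ a * SS (a + 1)) := by
    rw [SS, SS, ← seriesSum_sub, hw, seriesSum_neg, ← hu, SS]
  linear_combination hsub

lemma coeff_SS_big (a N : ℕ) (ha : 1 ≤ a) (h : N < a) : co N (SS a) = co N (1 : PS) := by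
  rw [SS, coeff_seriesSum, Finset.sum_eq_single 0]
  · rw [tS_zero]
  · intro j _ hj0
    apply coeff_tS_van
    have : 1 * a ≤ j * a := Nat.mul_le_mul_right a (by omega)
    omega
  · intro h; simp at h
  
lemma coeff_mul_one_sub (G : PS) (a N : ℕ) (ha : a ≤ N) :
    co N ((1 - zz * X ^ a) * G) = co N G - Polynomial.X * co (N - a) G := by
  rw [show (1 - zz * X ^ a) * G = G - (zz * G) * X ^ a by ring, map_sub]
  rw [co, PowerSeries.coeff_mul_X_pow', if_pos ha]
  congr 1
  rw [zz, PowerSeries.coeff_C_mul]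

lemma euler_coeff : ∀ N a : ℕ, 1 ≤ a → co N (EE a) = co N (SS a) := by
  intro N
  induction N using Nat.strong_induction_on with
  | _ N ih =>
    have main : ∀ k a : ℕ, 1 ≤ a → N < a + k → co N (EE a) = co N (SS a) := by
      intro k
      induction k with
      | zero => intro a ha hlt; rw [coeff_EE_big a N (by omega), coeff_SS_big a N ha (by omega)]
      | succ k ihk =>
        intro a ha hlt
        by_cases hNa : N < a
        · rw [coeff_EE_big a N hNa, coeff_SS_big a N ha hNa]
        · push_neg at hNa
          rw [EE_rec a, SS_rec a ha, coeff_mul_one_sub _ a N hNa,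
            coeff_mul_one_sub _ a N hNa,
            ihk (a + 1) (by omega) (by omega),
            ih (N - a) (by omega) (a + 1) (by omega)]
    intro a ha
    exact main N a ha (by omega)

lemma EE_eq_SS (a : ℕ) (ha : 1 ≤ a) : EE a = SS a := by
  ext N : 1
  exact euler_coeff N a ha


/-! ### the q-binomial theorem -/

noncomputable def BB (M i : ℕ) : PS := QQ M * iQ i * iQ (M - i)

lemma BB_self (n : ℕ) : BB n n = 1 := by
  simp [BB, Nat.sub_self, iQ_zero, QQ_mul_iQ]

lemma gauss (M : ℕ) :
    ∑ i ∈ range (M + 1), (-1 : PS) ^ i * X ^ ((i + 1).choose 2) * BB M i = QQ M := by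
  induction M with
  | zero => simp [BB, QQ, iQ_zero]
  | succ M ih =>
    have pascal : ∀ i, i ≤ M → BB (M + 1) i
        = BB M i + X ^ (M + 1 - i) * (QQ M * ((1 - X ^ i) * iQ i) * iQ (M + 1 - i)) := by
      intro i hi
      have hx : (X : PS) ^ (M + 1 - i) * X ^ i = X ^ (M + 1) := by
        rw [← pow_add]; congr 1; omega
      have hQ : QQ (M + 1) = QQ M * (1 - X ^ (M + 1)) := QQ_succ M
      have hiq : (1 - (X : PS) ^ (M + 1 - i)) * iQ (M + 1 - i) = iQ (M - i) := by
        rw [show M + 1 - i = (M - i) + 1 by omega]; exact iQ_succ (M - i)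
      simp only [BB]
      linear_combination (iQ i * iQ (M + 1 - i)) * hQ + (QQ M * iQ i) * hiq
        + (QQ M * iQ i * iQ (M + 1 - i)) * hx
    rw [Finset.sum_range_succ]
    have h1 : ∑ i ∈ range (M + 1), (-1 : PS) ^ i * X ^ ((i + 1).choose 2) * BB (M + 1) i
        = ∑ i ∈ range (M + 1), ((-1 : PS) ^ i * X ^ ((i + 1).choose 2) * BB M i
            + (-1 : PS) ^ i * X ^ ((i + 1).choose 2) *
              (X ^ (M + 1 - i) * (QQ M * ((1 - X ^ i) * iQ i) * iQ (M + 1 - i)))) := by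
      refine Finset.sum_congr rfl fun i hi => ?_
      rw [pascal i (by have := Finset.mem_range.mp hi; omega)]
      ring
    rw [h1, Finset.sum_add_distrib, ih]
    have h2 : ∑ i ∈ range (M + 1), (-1 : PS) ^ i * X ^ ((i + 1).choose 2) *
          (X ^ (M + 1 - i) * (QQ M * ((1 - X ^ i) * iQ i) * iQ (M + 1 - i)))
        = ∑ j ∈ range M,
            -(X ^ (M + 1) * ((-1 : PS) ^ j * X ^ ((j + 1).choose 2) * BB M j)) := by
      rw [Finset.sum_range_succ' _ M]
      have hz : (-1 : PS) ^ 0 * X ^ ((0 + 1).choose 2) *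
          (X ^ (M + 1 - 0) * (QQ M * ((1 - X ^ 0) * iQ 0) * iQ (M + 1 - 0))) = 0 := by
        simp
      rw [hz, add_zero]
      refine Finset.sum_congr rfl fun j hj => ?_
      have hj' : j < M := Finset.mem_range.mp hj
      have e2 : (X : PS) ^ ((j + 1 + 1).choose 2) = X ^ ((j + 1).choose 2) * X ^ (j + 1) := by
        rw [← pow_add]; congr 1; rw [choose_two_succ (j + 1)]; ring
      have e3 : (X : PS) ^ (M - j) * X ^ (j + 1) = X ^ (M + 1) := by
        rw [← pow_add]; congr 1; omega
      have hiq := iQ_succ j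
      rw [show M + 1 - (j + 1) = M - j by omega, e2]
      simp only [BB]
      linear_combination ((-1 : PS) ^ (j + 1) * X ^ ((j + 1).choose 2) * QQ M * iQ (M - j)
          * X ^ (j + 1) * X ^ (M - j)) * hiq
        + ((-1 : PS) ^ (j + 1) * X ^ ((j + 1).choose 2) * QQ M * iQ (M - j) * iQ j) * e3
    rw [h2]
    have h3 : (-1 : PS) ^ (M + 1) * X ^ ((M + 1 + 1).choose 2) * BB (M + 1) (M + 1)
        = -(X ^ (M + 1) * ((-1 : PS) ^ M * X ^ ((M + 1).choose 2) * BB M M)) := by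
      rw [BB_self, BB_self]
      have e4 : (X : PS) ^ ((M + 1 + 1).choose 2) = X ^ ((M + 1).choose 2) * X ^ (M + 1) := by
        rw [← pow_add]; congr 1; rw [choose_two_succ (M + 1)]; ring
      rw [e4]; ring
    rw [h3]
    have h5 : ∑ j ∈ range (M + 1),
          X ^ (M + 1) * ((-1 : PS) ^ j * X ^ ((j + 1).choose 2) * BB M j)
        = X ^ (M + 1) * QQ M := by
      rw [← Finset.mul_sum, ih]
    have h6 := Finset.sum_range_succ
      (fun j => X ^ (M + 1) * ((-1 : PS) ^ j * X ^ ((j + 1).choose 2) * BB M j)) M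
    have h7 : ∑ j ∈ range M,
          -(X ^ (M + 1) * ((-1 : PS) ^ j * X ^ ((j + 1).choose 2) * BB M j))
        = -∑ j ∈ range M,
            X ^ (M + 1) * ((-1 : PS) ^ j * X ^ ((j + 1).choose 2) * BB M j) := by
      rw [Finset.sum_neg_distrib]
    have h8 : QQ (M + 1) = QQ M * (1 - X ^ (M + 1)) := QQ_succ M
    linear_combination h7 + h6 - h5 - h8

lemma key2 (M : ℕ) :
    ∑ j ∈ range (M + 1), (-1 : PS) ^ j * X ^ ((M + 1 - j).choose 2) * (iQ (M - j) * iQ j)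
      = (-1) ^ M := by
  have refl := Finset.sum_range_reflect
    (fun i => (-1 : PS) ^ i * X ^ ((i + 1).choose 2) * BB M i) (M + 1)
  rw [gauss M] at refl
  refine (isUnit_QQ M).mul_left_cancel ?_
  rw [Finset.mul_sum]
  have hterm : ∀ j ∈ range (M + 1),
      QQ M * ((-1 : PS) ^ j * X ^ ((M + 1 - j).choose 2) * (iQ (M - j) * iQ j))
      = (-1 : PS) ^ M * ((-1 : PS) ^ (M + 1 - 1 - j) * X ^ ((M + 1 - 1 - j + 1).choose 2)
          * BB M (M + 1 - 1 - j)) := by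
    intro j hj
    have hj' : j ≤ M := by have := Finset.mem_range.mp hj; omega
    have hmj : ((-1 : PS)) ^ M * (-1) ^ (M - j) = (-1) ^ j := by
      have h1 : ((-1 : PS)) ^ (M - j) * (-1) ^ j = (-1) ^ M := by
        rw [← pow_add]; congr 1; omega
      have h2 : ((-1 : PS)) ^ (M - j) * (-1) ^ (M - j) = 1 := by
        rw [← mul_pow]; norm_num
      calc ((-1 : PS)) ^ M * (-1) ^ (M - j)
          = ((-1) ^ (M - j) * (-1) ^ j) * (-1) ^ (M - j) := by rw [h1]
        _ = ((-1) ^ (M - j) * (-1) ^ (M - j)) * (-1) ^ j := by ring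
        _ = (-1) ^ j := by rw [h2, one_mul]
    rw [show M + 1 - 1 - j = M - j by omega, show M - j + 1 = M + 1 - j by omega]
    simp only [BB]
    rw [show M - (M - j) = j by omega]
    linear_combination (-(QQ M * X ^ ((M + 1 - j).choose 2) * iQ (M - j) * iQ j)) * hmj
  rw [Finset.sum_congr rfl hterm, ← Finset.mul_sum, refl]
  ring

/-! ### the diagonal terms -/

lemma two_choose_two (n : ℕ) : 2 * (n + 1).choose 2 = (n + 1) * n := by
  induction n with
  | zero => rfl
  | succ n ih =>
    rw [choose_two_succ (n + 1), Nat.mul_add, ih]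
    ring

lemma expo (m j : ℕ) :
    (m + 1) ^ 2 + (j * (m + 2) + j.choose 2) = (m + j + 2).choose 2 + (m + 1).choose 2 := by
  rcases j with _ | i
  · have h2 : 2 * ((m + 0 + 2).choose 2) = (m + 2) * (m + 1) := two_choose_two (m + 1)
    have h3 : 2 * ((m + 1).choose 2) = (m + 1) * m := two_choose_two m
    have h0 : Nat.choose 0 2 = 0 := rfl
    apply Nat.eq_of_mul_eq_mul_left (show 0 < 2 by norm_num)
    rw [h0]
    zify at h2 h3 ⊢
    linear_combination - h2 - h3
  · apply Nat.eq_of_mul_eq_mul_left (show 0 < 2 by norm_num)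
    rw [show m + (i + 1) + 2 = (m + i + 2) + 1 by omega]
    have h1 := two_choose_two i
    have h2 := two_choose_two (m + i + 2)
    have h3 := two_choose_two m
    zify at h1 h2 h3 ⊢
    linear_combination h1 - h2 - h3

noncomputable def RW (m j : ℕ) : PS :=
  (zz ^ (m + 1) * X ^ ((m + 1) ^ 2) * iQ m) * tS (m + 2) j

lemma key (p : ℕ) :
    ∑ j ∈ range (p + 1), RW (p - j) j
      = (-1 : PS) ^ p * zz ^ (p + 1) * X ^ ((p + 2).choose 2) := by
  have hterm : ∀ j ∈ range (p + 1), RW (p - j) j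
      = (zz ^ (p + 1) * X ^ ((p + 2).choose 2)) *
          ((-1 : PS) ^ j * X ^ ((p + 1 - j).choose 2) * (iQ (p - j) * iQ j)) := by
    intro j hj
    have hj' : j ≤ p := by have := Finset.mem_range.mp hj; omega
    obtain ⟨m, rfl⟩ : ∃ m, p = m + j := ⟨p - j, by omega⟩
    rw [show m + j - j = m by omega, show m + j + 1 - j = m + 1 by omega]
    simp only [RW, tS]
    have hz : zz ^ (m + 1) * zz ^ j = zz ^ (m + j + 1) := by
      rw [← pow_add]; congr 1; omega
    have hx : (X : PS) ^ ((m + 1) ^ 2) * X ^ (j * (m + 2) + j.choose 2)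
        = X ^ ((m + j + 2).choose 2) * X ^ ((m + 1).choose 2) := by
      rw [← pow_add, ← pow_add]; congr 1; exact expo m j
    linear_combination ((-1 : PS) ^ j * iQ m * iQ j
        * (X ^ ((m + 1) ^ 2) * X ^ (j * (m + 2) + j.choose 2))) * hz
      + ((-1 : PS) ^ j * iQ m * iQ j * zz ^ (m + j + 1)) * hx
  rw [Finset.sum_congr rfl hterm, ← Finset.mul_sum, key2 p]
  ring


/-! ### diagonal reindexing of double series -/

lemma seriesSum_diag (W : ℕ → ℕ → PS) (hW : ∀ m j N, N < m + j + 1 → co N (W m j) = 0) :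
    seriesSum (fun m => seriesSum (fun j => W m j)) =
    seriesSum (fun p => ∑ j ∈ range (p + 1), W (p - j) j) := by
  ext N : 1
  rw [coeff_seriesSum, coeff_seriesSum]
  simp only [coeff_seriesSum, map_sum]
  rw [← Finset.sum_product']
  rw [Finset.sum_sigma' (range (N + 1)) (fun p => range (p + 1))
    (fun p j => co N (W (p - j) j))]
  rw [← Finset.sum_filter_of_ne (p := fun x : ℕ × ℕ => x.1 + x.2 ≤ N)
    (f := fun x : ℕ × ℕ => co N (W x.1 x.2))
    (by intro x hx hne; by_contra hc; exact hne (hW x.1 x.2 N (by omega)))]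
  refine Finset.sum_nbij' (fun x : ℕ × ℕ => (⟨x.1 + x.2, x.2⟩ : Σ _ : ℕ, ℕ))
    (fun y : Σ _ : ℕ, ℕ => ((y.1 - y.2, y.2) : ℕ × ℕ)) ?_ ?_ ?_ ?_ ?_
  · intro x hx
    simp only [Finset.mem_filter, Finset.mem_product, Finset.mem_range] at hx
    simp only [Finset.mem_sigma, Finset.mem_range]
    omega
  · intro y hy
    simp only [Finset.mem_sigma, Finset.mem_range] at hy
    simp only [Finset.mem_filter, Finset.mem_product, Finset.mem_range]
    omega
  · rintro ⟨x1, x2⟩ hx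
    simp only [Finset.mem_filter, Finset.mem_product, Finset.mem_range] at hx
    dsimp only
    rw [show x1 + x2 - x2 = x1 by omega]
  · rintro ⟨p, j⟩ hy
    simp only [Finset.mem_sigma, Finset.mem_range] at hy
    dsimp only
    rw [show p - j + j = p by omega]
  · intro x hx
    simp only [Finset.mem_filter, Finset.mem_product, Finset.mem_range] at hx
    simp only []
    rw [show x.1 + x.2 - x.2 = x.1 by omega]

lemma hRW : ∀ m j N : ℕ, N < m + j + 1 → co N (RW m j) = 0 := by
  intro m j N h
  have hform : RW m j = (zz ^ (m + 1) * iQ m * ((-1) ^ j * zz ^ j))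
      * X ^ ((m + 1) ^ 2 + (j * (m + 2) + j.choose 2)) * iQ j := by
    simp only [RW, tS]
    rw [pow_add]
    ring
  rw [hform]
  apply coeff_van
  have hm : m + 1 ≤ (m + 1) ^ 2 := Nat.le_self_pow (by norm_num) _
  have hj : j * 1 ≤ j * (m + 2) := Nat.mul_le_mul_left j (by omega)
  omega

end StmtAux


open StmtAux Finset in
/-- The second identity of Corollary 3.5. -/
theorem stmt11 :
    seriesSum (fun m =>
      zz ^ (m + 1) * (X : PowerSeries (Polynomial ℚ)) ^ ((m + 1) ^ 2)
        * seriesProd (fun k => 1 - zz * X ^ (m + 1 + 1 + k))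
        * Ring.inverse (∏ k ∈ Finset.range (m + 1 - 1), (1 - (X : PowerSeries (Polynomial ℚ)) ^ (k + 1)))) =
    seriesSum (fun m =>
      (-1 : PowerSeries (Polynomial ℚ)) ^ (m + 1 - 1) * zz ^ (m + 1)
        * X ^ ((m + 1) * (m + 1 + 1) / 2)) := by
  have hL : ∀ m : ℕ, zz ^ (m + 1) * (X : PS) ^ ((m + 1) ^ 2)
        * seriesProd (fun k => 1 - zz * X ^ (m + 1 + 1 + k))
        * Ring.inverse (∏ k ∈ Finset.range (m + 1 - 1), (1 - (X : PS) ^ (k + 1)))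
      = seriesSum (fun j => RW m j) := by
    intro m
    have h1 : seriesProd (fun k => 1 - zz * X ^ (m + 1 + 1 + k)) = EE (m + 2) := rfl
    have h2 : Ring.inverse (∏ k ∈ Finset.range (m + 1 - 1), (1 - (X : PS) ^ (k + 1))) = iQ m := rfl
    rw [h1, h2, EE_eq_SS (m + 2) (by omega)]
    rw [show zz ^ (m + 1) * (X : PS) ^ ((m + 1) ^ 2) * SS (m + 2) * iQ m
      = (zz ^ (m + 1) * X ^ ((m + 1) ^ 2) * iQ m) * SS (m + 2) by ring]
    rw [SS]
    exact seriesSum_mul _ _ (fun n N h => coeff_tS_lt (m + 2) n N (by omega) h)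
  have hfin : ∀ p : ℕ, (-1 : PS) ^ p * zz ^ (p + 1) * X ^ ((p + 2).choose 2)
      = (-1 : PS) ^ (p + 1 - 1) * zz ^ (p + 1) * X ^ ((p + 1) * (p + 1 + 1) / 2) := by
    intro p
    have h : 2 * ((p + 2).choose 2) = (p + 1 + 1) * (p + 1) := two_choose_two (p + 1)
    have hdiv : (p + 1) * (p + 1 + 1) / 2 = (p + 2).choose 2 := by
      apply Nat.div_eq_of_eq_mul_left (show 0 < 2 by norm_num)
      rw [Nat.mul_comm (p + 1) (p + 1 + 1), ← h]
      ring
    rw [hdiv, show p + 1 - 1 = p from rfl]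
  exact (seriesSum_congr hL).trans ((seriesSum_diag RW hRW).trans
    ((seriesSum_congr key).trans (seriesSum_congr hfin)))
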